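/- Let G be a capacitated graph containing an odd cycle C all of whose vertices have degree 3 in G, such that all edges of C carry the same capacity A, where A is a symmetric union of exactly two open integer unit intervals of ℝ/5ℤ (i.e., Me(A) = 2), and the third edge incident with each vertex of C has capacity contained in (1,4). Then G admits no sub-5-MCNZF; consequently, any graph obtained by realizing each capacity by a g-edge of that open 5-capacity has circular flow number at least 5. -/

import Mathlib

open Finset


open Finset

/-- A finite multigraph given with a reference orientation: each edge `e` goes
from `src e` to `tgt e`.  An orientation of the graph is a sign function
`σ : E → ℤˣ` telling, for each edge, whether it keeps (`1`) or reverses (`-1`)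
its reference direction. -/
structure Multigraph where
  V : Type
  E : Type
  [fintV : Fintype V]
  [fintE : Fintype E]
  [decV : DecidableEq V]
  [decE : DecidableEq E]
  src : E → V
  tgt : E → V

attribute [instance] Multigraph.fintV Multigraph.fintE Multigraph.decV Multigraph.decE

/-- `f` is a flow with respect to the reference orientation: at every vertex the
sum over outgoing edges equals the sum over incoming edges. -/
def Multigraph.IsFlow (G : Multigraph) {M : Type*} [AddCommMonoid M] (f : G.E → M) : Prop :=
  ∀ v : G.V,
    ∑ e ∈ Finset.univ.filter (fun e => G.src e = v), f e =
    ∑ e ∈ Finset.univ.filter (fun e => G.tgt e = v), f e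

/-- `f` is a flow on the orientation `σ` of `G` (values of `f` are read in the
direction given by `σ`). -/
def Multigraph.IsFlowOn (G : Multigraph) {M : Type*} [AddCommGroup M]
    (σ : G.E → ℤˣ) (f : G.E → M) : Prop :=
  G.IsFlow (fun e => ((σ e : ℤ) • f e))

/-- The open interval `(a,b)` of `ℝ/rℤ`: the points traversed strictly clockwise
from `a` to `b`, with the convention `(a,a) = ℝ/rℤ \ {a}`. -/
noncomputable def openArc (r a b : ℝ) : Set (AddCircle r) :=
  (fun t : ℝ => (t : AddCircle r)) '' Set.Ioo a (a + (r - Int.fract ((a - b) / r) * r))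

/-- The closed interval `[a,b]` of `ℝ/rℤ`: the points traversed clockwise from
`a` to `b`, endpoints included, with the convention `[a,a] = {a}`. -/
noncomputable def closedArc (r a b : ℝ) : Set (AddCircle r) :=
  (fun t : ℝ => (t : AddCircle r)) '' Set.Icc a (a + Int.fract ((b - a) / r) * r)

/-- `G` has a circular nowhere-zero `r`-flow: an orientation together with a
real-valued flow all of whose values lie in `[1, r-1]`. -/
def Multigraph.HasCNZF (G : Multigraph) (r : ℝ) : Prop :=
  ∃ (σ : G.E → ℤˣ) (f : G.E → ℝ), G.IsFlowOn σ f ∧ ∀ e, f e ∈ Set.Icc (1:ℝ) (r - 1)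

/-- The circular flow number of `G`, as an extended real (`⊤` if `G` admits no
circular nowhere-zero `r`-flow for any `r`, e.g. if `G` has a bridge). -/
noncomputable def circFlowNumber (G : Multigraph) : EReal :=
  sInf {x : EReal | ∃ r : ℝ, x = (r : EReal) ∧ G.HasCNZF r}

/-- The graph `G ∪ e₀` obtained from `G` by adding one extra edge `e₀ = none`
joining `u` to `v`. -/
def Multigraph.addEdge (G : Multigraph) (u v : G.V) : Multigraph where
  V := G.V
  E := Option G.E
  src := fun e => e.elim u G.src
  tgt := fun e => e.elim v G.tgt

/-- The capacity of the capacitated g-edge `(G, cap)` with terminals `u,v`: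
all values `f e₀` of modular flows `f` on `G ∪ e₀` (over all orientations) whose
value on each edge `e` of `G` lies in the prescribed set `cap e`. -/
def CPcap (r : ℝ) (G : Multigraph) (cap : G.E → Set (AddCircle r)) (u v : G.V) :
    Set (AddCircle r) :=
  {t | ∃ (σ : Option G.E → ℤˣ) (f : Option G.E → AddCircle r),
        (G.addEdge u v).IsFlowOn σ f ∧ (∀ e : G.E, f (some e) ∈ cap e) ∧ f none = t}

/-- The open `r`-capacity `CP_r(G_{u,v})` of the g-edge `G_{u,v}`. -/
noncomputable def CP (r : ℝ) (G : Multigraph) (u v : G.V) : Set (AddCircle r) :=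
  CPcap r G (fun _ => openArc r 1 (r - 1)) u v

/-- A capacitated graph `(G, cap)` admits a flow respecting all capacities
(for `cap e = (1,4) ⊆ ℝ/5ℤ` everywhere this is a sub-5-MCNZF). -/
def HasCapFlow (r : ℝ) (G : Multigraph) (cap : G.E → Set (AddCircle r)) : Prop :=
  ∃ (σ : G.E → ℤˣ) (f : G.E → AddCircle r), G.IsFlowOn σ f ∧ ∀ e, f e ∈ cap e

/-- Deletion of the edge `e₀`. -/
def Multigraph.deleteEdge (G : Multigraph) (e₀ : G.E) : Multigraph where
  V := G.V
  E := {e : G.E // e ≠ e₀}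
  src := fun e => G.src e.1
  tgt := fun e => G.tgt e.1

/-- Degree of a vertex (loops count twice). -/
def Multigraph.degree (G : Multigraph) (v : G.V) : ℕ :=
  (Finset.univ.filter (fun e => G.src e = v)).card +
  (Finset.univ.filter (fun e => G.tgt e = v)).card

/-- The tail of edge `e` in the orientation `σ`. -/
def Multigraph.osrc (G : Multigraph) (σ : G.E → ℤˣ) (e : G.E) : G.V :=
  if σ e = 1 then G.src e else G.tgt e

/-- The head of edge `e` in the orientation `σ`. -/
def Multigraph.otgt (G : Multigraph) (σ : G.E → ℤˣ) (e : G.E) : G.V :=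
  if σ e = 1 then G.tgt e else G.src e

/-- Vertex embedding for edge replacement. -/
def erEmbed (G : Multigraph) (H : G.E → Multigraph) (a b : ∀ e, (H e).V) (e : G.E)
    (x : (H e).V) : G.V ⊕ Σ e : G.E, {x : (H e).V // x ≠ a e ∧ x ≠ b e} :=
  if h1 : x = a e then Sum.inl (G.src e)
  else if h2 : x = b e then Sum.inl (G.tgt e)
  else Sum.inr ⟨e, x, h1, h2⟩

/-- The graph obtained from `G` by replacing each edge `e` by the g-edge
`(H e)_{a e, b e}`, the terminal `a e` being glued onto `G.src e` and `b e`
onto `G.tgt e`. -/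
def edgeReplace (G : Multigraph) (H : G.E → Multigraph) (a b : ∀ e, (H e).V) : Multigraph where
  V := G.V ⊕ Σ e : G.E, {x : (H e).V // x ≠ a e ∧ x ≠ b e}
  E := Σ e : G.E, (H e).E
  src := fun ee => erEmbed G H a b ee.1 ((H ee.1).src ee.2)
  tgt := fun ee => erEmbed G H a b ee.1 ((H ee.1).tgt ee.2)

private lemma openArc_unit (a : ℝ) :
    openArc 5 a (a+1) = (fun t : ℝ => (t : AddCircle (5:ℝ))) '' Set.Ioo a (a+1) := by
  unfold openArc
  have h1 : a - (a+1) = -1 := by ring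
  have h2 : ⌊((-1:ℝ)/5)⌋ = -1 := by apply Int.floor_eq_iff.mpr; constructor <;> norm_num
  rw [h1, Int.fract, h2]
  norm_num

private lemma openArc_14 :
    openArc 5 1 4 = (fun t : ℝ => (t : AddCircle (5:ℝ))) '' Set.Ioo 1 4 := by
  unfold openArc
  have h1 : (1:ℝ) - 4 = -3 := by ring
  have h2 : ⌊((-3:ℝ)/5)⌋ = -1 := by apply Int.floor_eq_iff.mpr; constructor <;> norm_num
  rw [h1, Int.fract, h2]
  norm_num

private lemma neg_mem_img {a b : ℝ} {x : AddCircle (5:ℝ)}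
    (h : x ∈ (fun t:ℝ => (t:AddCircle (5:ℝ))) '' Set.Ioo a b) :
    -x ∈ (fun t:ℝ => (t:AddCircle (5:ℝ))) '' Set.Ioo (-b) (-a) := by
  obtain ⟨u, hu, rfl⟩ := h
  exact ⟨-u, ⟨neg_lt_neg hu.2, neg_lt_neg hu.1⟩, rfl⟩

private lemma key_disj {a u v w : ℝ} (hu : u ∈ Set.Ioo a (a+1)) (hv : v ∈ Set.Ioo a (a+1))
    (hw : w ∈ Set.Ioo (1:ℝ) 4 ∨ w ∈ Set.Ioo (-4:ℝ) (-1))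
    (h : (u : AddCircle (5:ℝ)) - v = (w : AddCircle (5:ℝ))) : False := by
  have h0 : ((u - v - w : ℝ) : AddCircle (5:ℝ)) = 0 := by
    have : ((u - v - w : ℝ) : AddCircle (5:ℝ)) = (u : AddCircle (5:ℝ)) - v - w := rfl
    rw [this, h, sub_self]
  obtain ⟨z, hz⟩ := (AddCircle.coe_eq_zero_iff (5:ℝ)).mp h0
  have hz' : (z:ℝ) * 5 = u - v - w := by rw [← hz]; simp [zsmul_eq_mul]
  obtain ⟨hu1, hu2⟩ := hu; obtain ⟨hv1, hv2⟩ := hv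
  rcases hw with ⟨hw1, hw2⟩ | ⟨hw1, hw2⟩
  · have b1 : (-1:ℝ) < z := by nlinarith
    have b2 : (z:ℝ) < 0 := by nlinarith
    have b1' : (-1:ℤ) < z := by exact_mod_cast b1
    have b2' : z < 0 := by exact_mod_cast b2
    omega
  · have b1 : (0:ℝ) < z := by nlinarith
    have b2 : (z:ℝ) < 1 := by nlinarith
    have b1' : (0:ℤ) < z := by exact_mod_cast b1
    have b2' : z < 1 := by exact_mod_cast b2
    omega

private lemma zero_not_14 : (0:AddCircle (5:ℝ)) ∉ (fun t:ℝ => (t:AddCircle (5:ℝ))) '' Set.Ioo 1 4 := by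
  rintro ⟨w, ⟨hw1, hw2⟩, h⟩
  obtain ⟨z, hz⟩ := (AddCircle.coe_eq_zero_iff (5:ℝ)).mp h
  have hz' : (z:ℝ) * 5 = w := by rw [← hz]; simp [zsmul_eq_mul]
  have b1 : (0:ℝ) < z := by nlinarith
  have b2 : (z:ℝ) < 1 := by nlinarith
  have b1' : (0:ℤ) < z := by exact_mod_cast b1
  have b2' : z < 1 := by exact_mod_cast b2
  omega
private lemma extract_one (G : Multigraph) (v : G.V) (s : Finset G.E)
    (h : ∑ e ∈ s, ((if G.src e = v then 1 else 0) + (if G.tgt e = v then 1 else 0)) = 1) :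
    ∃ e3 ∈ s, ((G.src e3 = v ∧ G.tgt e3 ≠ v) ∨ (G.src e3 ≠ v ∧ G.tgt e3 = v)) ∧
      ∀ e ∈ s, e ≠ e3 → G.src e ≠ v ∧ G.tgt e ≠ v := by
  set D : G.E → ℕ := fun e => (if G.src e = v then 1 else 0) + (if G.tgt e = v then 1 else 0) with hD
  obtain ⟨e3, he3s, he3⟩ := Finset.exists_ne_zero_of_sum_ne_zero (s := s) (f := D) (by rw [h]; norm_num)
  have hsplit : D e3 + ∑ e ∈ s.erase e3, D e = 1 := by rw [Finset.add_sum_erase s D he3s, h]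
  have hD3 : D e3 = 1 := by omega
  have hrest : ∑ e ∈ s.erase e3, D e = 0 := by omega
  refine ⟨e3, he3s, ?_, ?_⟩
  · have := hD3
    simp only [hD] at this
    by_cases h1 : G.src e3 = v <;> by_cases h2 : G.tgt e3 = v <;> simp [h1, h2] at this ⊢
  · intro e hes hne
    have h0 : D e = 0 := by
      have := (Finset.sum_eq_zero_iff.mp hrest) e (Finset.mem_erase.mpr ⟨hne, hes⟩)
      exact this
    simp only [hD] at h0
    by_cases h1 : G.src e = v <;> by_cases h2 : G.tgt e = v <;> simp [h1, h2] at h0 ⊢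
private lemma part1 (G : Multigraph) (cap : G.E → Set (AddCircle (5 : ℝ)))
    (m : ℕ) (hodd : Odd m) (p : ℕ → G.V) (pe : ℕ → G.E)
    (hclosed : p m = p 0)
    (hinjV : Set.InjOn p (Set.Iio m)) (hinjE : Set.InjOn pe (Set.Iio m))
    (hinc : ∀ i < m, (G.src (pe i) = p i ∧ G.tgt (pe i) = p (i + 1)) ∨
      (G.src (pe i) = p (i + 1) ∧ G.tgt (pe i) = p i))
    (n : ℤ) (A : Set (AddCircle (5 : ℝ)))
    (hA : A = openArc 5 (n : ℝ) ((n : ℝ) + 1) ∪ openArc 5 (-(n : ℝ) - 1) (-(n : ℝ)))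
    (hcapA : ∀ i < m, cap (pe i) = A)
    (hdeg : ∀ i < m, G.degree (p i) = 3)
    (hthird : ∀ i < m, ∀ e : G.E, (∀ j < m, e ≠ pe j) →
      (G.src e = p i ∨ G.tgt e = p i) → cap e ⊆ openArc 5 1 4) :
    ¬ HasCapFlow 5 G cap := by
  rintro ⟨σ, f, hflow, hcap⟩
  have hm2 : m % 2 = 1 := Nat.odd_iff.mp hodd
  have hm0 : 0 < m := by omega
  set g : G.E → AddCircle (5:ℝ) := fun e => ((σ e : ℤ) • f e) with hgdef
  have hgf : ∀ e, g e = f e ∨ g e = - f e := by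
    intro e
    rcases Int.units_eq_one_or (σ e) with h | h <;> simp [hgdef, h]
  have hnet : ∀ v, ∑ e, ((if G.src e = v then g e else 0) - (if G.tgt e = v then g e else 0))
      = 0 := by
    intro v
    have h := hflow v
    rw [Finset.sum_sub_distrib, ← Finset.sum_filter, ← Finset.sum_filter, h, sub_self]
  have hdegsum : ∀ i < m,
      ∑ e : G.E, ((if G.src e = p i then 1 else 0) + (if G.tgt e = p i then 1 else 0)) = 3 := by
    intro i hi
    have h := hdeg i hi
    unfold Multigraph.degree at h
    simp only [Finset.card_filter] at h
    rw [Finset.sum_add_distrib]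
    exact h
  by_cases hm1 : m = 1
  · -- loop case
    subst hm1
    have hloop : G.src (pe 0) = p 0 ∧ G.tgt (pe 0) = p 0 := by
      rcases hinc 0 (by norm_num) with ⟨h1, h2⟩ | ⟨h1, h2⟩
      · exact ⟨h1, by rw [h2, hclosed]⟩
      · exact ⟨by rw [h1, hclosed], h2⟩
    have hsum := hdegsum 0 (by norm_num)
    have hs1 := Finset.add_sum_erase Finset.univ
      (fun e => (if G.src e = p 0 then 1 else 0) + (if G.tgt e = p 0 then 1 else 0))
      (Finset.mem_univ (pe 0))
    have hval : ((if G.src (pe 0) = p 0 then 1 else 0) + (if G.tgt (pe 0) = p 0 then 1 else 0) : ℕ)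
        = 2 := by simp [hloop.1, hloop.2]
    have h1 : ∑ e ∈ Finset.univ.erase (pe 0),
        ((if G.src e = p 0 then 1 else 0) + (if G.tgt e = p 0 then 1 else 0)) = 1 := by
      simp only [hval, hsum] at hs1
      omega
    obtain ⟨e3, he3mem, hxor, hothers⟩ := extract_one G (p 0) _ h1
    have he3ne : ∀ j < 1, e3 ≠ pe j := by
      intro j hj
      interval_cases j
      exact (Finset.mem_erase.mp he3mem).1
    have hcap3 : f e3 ∈ (fun t:ℝ => (t:AddCircle (5:ℝ))) '' Set.Ioo 1 4 := by
      rw [← openArc_14]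
      exact hthird 0 (by norm_num) e3 he3ne (by tauto) (hcap e3)
    have hn := hnet (p 0)
    set c : G.E → AddCircle (5:ℝ) :=
      fun e => (if G.src e = p 0 then g e else 0) - (if G.tgt e = p 0 then g e else 0) with hcdef
    have hs1' := Finset.add_sum_erase Finset.univ c (Finset.mem_univ (pe 0))
    have hs3' := Finset.add_sum_erase _ c he3mem
    have hrest : ∑ e ∈ (Finset.univ.erase (pe 0)).erase e3, c e = 0 := by
      apply Finset.sum_eq_zero
      intro e he
      obtain ⟨hne3, hmem⟩ := Finset.mem_erase.mp he
      obtain ⟨hnsrc, hntgt⟩ := hothers e hmem hne3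
      simp [hcdef, hnsrc, hntgt]
    have hc0 : c (pe 0) = 0 := by simp [hcdef, hloop.1, hloop.2]
    rw [hrest, add_zero] at hs3'
    rw [← hs3', hc0, zero_add] at hs1'
    rw [hn] at hs1'
    -- hs1' : c e3 = 0
    have hfe3 : f e3 = 0 := by
      rcases hxor with ⟨h1', h2'⟩ | ⟨h1', h2'⟩ <;> rcases hgf e3 with hg3 | hg3 <;>
        simp [hcdef, h1', h2', hg3, neg_eq_zero] at hs1' <;> exact hs1'
    rw [hfe3] at hcap3
    exact zero_not_14 hcap3
  · -- m ≥ 3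
    have hm3 : 3 ≤ m := by omega
    set I1 : Set (AddCircle (5:ℝ)) :=
      (fun t:ℝ => (t:AddCircle (5:ℝ))) '' Set.Ioo (n:ℝ) ((n:ℝ)+1) with hI1
    set I2 : Set (AddCircle (5:ℝ)) :=
      (fun t:ℝ => (t:AddCircle (5:ℝ))) '' Set.Ioo (-(n:ℝ)-1) (-(n:ℝ)) with hI2
    have hAeq : A = I1 ∪ I2 := by
      have h2 : openArc 5 (-(n:ℝ)-1) (-(n:ℝ)) = I2 := by
        have h := openArc_unit (-(n:ℝ)-1)
        rw [show (-(n:ℝ)-1) + 1 = -(n:ℝ) by ring] at h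
        exact h
      rw [hA, openArc_unit, h2]
    have hnegA : ∀ y : AddCircle (5:ℝ), y ∈ I1 ∪ I2 → -y ∈ I1 ∪ I2 := by
      rintro y (hy | hy)
      · right
        have h := neg_mem_img hy
        rw [show -((n:ℝ)+1) = -(n:ℝ)-1 by ring] at h
        exact h
      · left
        have h := neg_mem_img hy
        rw [show -(-(n:ℝ)) = (n:ℝ) by ring, show -(-(n:ℝ)-1) = (n:ℝ)+1 by ring] at h
        exact h
    set x : ℕ → AddCircle (5:ℝ) :=
      fun i => if G.src (pe i) = p i then g (pe i) else - g (pe i) with hxdef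
    have hxA : ∀ i, i < m → x i ∈ I1 ∪ I2 := by
      intro i hi
      have hf : f (pe i) ∈ I1 ∪ I2 := by
        rw [← hAeq, ← hcapA i hi]; exact hcap (pe i)
      by_cases hc : G.src (pe i) = p i <;> rcases hgf (pe i) with hg' | hg' <;>
        simp only [hxdef, hc, if_true, if_false, hg', neg_neg] <;>
        first
          | exact hf
          | exact hnegA _ hf
    -- the step lemma
    have hstep : ∀ j, j < m → ∃ w : ℝ,
        (w ∈ Set.Ioo (1:ℝ) 4 ∨ w ∈ Set.Ioo (-4:ℝ) (-1)) ∧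
        x ((j + (m-1)) % m) - x j = (w : AddCircle (5:ℝ)) := by
      intro j hj
      obtain ⟨j', hj'eq, hj'lt, hj'ne, hj'p, hj'val⟩ :
          ∃ j' : ℕ, (j + (m-1)) % m = j' ∧ j' < m ∧ j' ≠ j ∧ p (j'+1) = p j ∧
            ((j = 0 → j' = m - 1) ∧ (j ≠ 0 → j' = j - 1)) := by
        by_cases h0 : j = 0
        · refine ⟨m-1, ?_, by omega, by omega, ?_, by omega, by omega⟩
          · subst h0; rw [Nat.zero_add]; exact Nat.mod_eq_of_lt (by omega)
          · rw [show m-1+1 = m by omega, hclosed, h0]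
        · refine ⟨j-1, ?_, by omega, by omega, ?_, by omega, by omega⟩
          · rw [show j + (m-1) = (j-1) + m by omega, Nat.add_mod_right]
            exact Nat.mod_eq_of_lt (by omega)
          · rw [show j-1+1 = j by omega]
      rw [hj'eq]
      have hpne : p j' ≠ p j := fun h => hj'ne (hinjV hj'lt hj h)
      have hpne2 : p (j+1) ≠ p j := by
        by_cases h : j + 1 < m
        · intro heq
          have := hinjV h hj heq
          omega
        · have hjm : j + 1 = m := by omega
          rw [hjm, hclosed]
          intro heq
          have := hinjV (show (0:ℕ) ∈ Set.Iio m by simpa using hm0) hj heq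
          omega
      have hene : pe j' ≠ pe j := fun h => hj'ne (hinjE hj'lt hj h)
      -- degree contributions
      have hD1 : ((if G.src (pe j') = p j then 1 else 0) +
          (if G.tgt (pe j') = p j then 1 else 0) : ℕ) = 1 := by
        rcases hinc j' hj'lt with ⟨h1, h2⟩ | ⟨h1, h2⟩
        · rw [h1, h2, hj'p]; simp [hpne]
        · rw [h1, h2, hj'p]; simp [hpne]
      have hD2 : ((if G.src (pe j) = p j then 1 else 0) +
          (if G.tgt (pe j) = p j then 1 else 0) : ℕ) = 1 := by
        rcases hinc j hj with ⟨h1, h2⟩ | ⟨h1, h2⟩ <;> rw [h1, h2] <;> simp [hpne2]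
      have hsum := hdegsum j hj
      set D : G.E → ℕ :=
        fun e => (if G.src e = p j then 1 else 0) + (if G.tgt e = p j then 1 else 0) with hDdef
      have hs1 : D (pe j') + ∑ e ∈ Finset.univ.erase (pe j'), D e = ∑ e, D e :=
        Finset.add_sum_erase _ _ (Finset.mem_univ _)
      have hmem2 : pe j ∈ Finset.univ.erase (pe j') :=
        Finset.mem_erase.mpr ⟨Ne.symm hene, Finset.mem_univ _⟩
      have hs2 : D (pe j) + ∑ e ∈ (Finset.univ.erase (pe j')).erase (pe j), D e
          = ∑ e ∈ Finset.univ.erase (pe j'), D e :=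
        Finset.add_sum_erase _ _ hmem2
      have h1 : ∑ e ∈ (Finset.univ.erase (pe j')).erase (pe j), D e = 1 := by
        have e1 : D (pe j') = 1 := hD1
        have e2 : D (pe j) = 1 := hD2
        have hsum' : ∑ e, D e = 3 := hsum
        omega
      obtain ⟨e3, he3mem, hxor, hothers⟩ := extract_one G (p j) _ h1
      have he3nej : e3 ≠ pe j := (Finset.mem_erase.mp he3mem).1
      have he3nej' : e3 ≠ pe j' :=
        (Finset.mem_erase.mp (Finset.mem_erase.mp he3mem).2).1
      have he3pe : ∀ k, k < m → e3 ≠ pe k := by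
        intro k hk heq
        have hvinc : p k = p j ∨ p (k+1) = p j := by
          rcases hxor with ⟨h1', _⟩ | ⟨_, h1'⟩ <;>
            rcases hinc k hk with ⟨h2', h3'⟩ | ⟨h2', h3'⟩ <;> rw [heq] at h1' <;>
            first
              | exact Or.inl (h2'.symm.trans h1')
              | exact Or.inr (h2'.symm.trans h1')
              | exact Or.inl (h3'.symm.trans h1')
              | exact Or.inr (h3'.symm.trans h1')
        rcases hvinc with hv | hv
        · have : k = j := hinjV hk hj hv
          exact he3nej (this ▸ heq)
        · by_cases hk1 : k + 1 < m
          · have hkj : k + 1 = j := hinjV hk1 hj hv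
            have : k = j' := by omega
            exact he3nej' (this ▸ heq)
          · have hk1m : k + 1 = m := by omega
            have hp0 : p 0 = p j := by rw [← hclosed, ← hk1m]; exact hv
            have hj0 : (0:ℕ) = j :=
              hinjV (show (0:ℕ) ∈ Set.Iio m by simpa using hm0) hj hp0
            have : k = j' := by omega
            exact he3nej' (this ▸ heq)
      have hcap3 : f e3 ∈ (fun t:ℝ => (t:AddCircle (5:ℝ))) '' Set.Ioo 1 4 := by
        rw [← openArc_14]
        exact hthird j hj e3 he3pe (by tauto) (hcap e3)
      have hn := hnet (p j)
      set c : G.E → AddCircle (5:ℝ) :=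
        fun e => (if G.src e = p j then g e else 0) - (if G.tgt e = p j then g e else 0)
        with hcdef
      have hs1' := Finset.add_sum_erase Finset.univ c (Finset.mem_univ (pe j'))
      have hs2' := Finset.add_sum_erase _ c hmem2
      have hs3' := Finset.add_sum_erase _ c he3mem
      have hrest : ∑ e ∈ ((Finset.univ.erase (pe j')).erase (pe j)).erase e3, c e = 0 := by
        apply Finset.sum_eq_zero
        intro e he
        obtain ⟨hne3, hmem⟩ := Finset.mem_erase.mp he
        obtain ⟨hnsrc, hntgt⟩ := hothers e hmem hne3
        simp [hcdef, hnsrc, hntgt]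
      rw [hrest, add_zero] at hs3'
      rw [← hs3'] at hs2'
      rw [← hs2'] at hs1'
      rw [hn] at hs1'
      -- hs1' : c (pe j') + (c (pe j) + c e3) = 0
      have hce1 : c (pe j') = - x j' := by
        rcases hinc j' hj'lt with ⟨h1, h2⟩ | ⟨h1, h2⟩
        · have ht : G.tgt (pe j') = p j := h2.trans hj'p
          have hs : ¬ (G.src (pe j') = p j) := by rw [h1]; exact hpne
          have hxval : x j' = g (pe j') := by simp [hxdef, h1]
          simp [hcdef, hs, ht, hxval]
        · have hsrc : G.src (pe j') = p j := h1.trans hj'p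
          have ht : ¬ (G.tgt (pe j') = p j) := by rw [h2]; exact hpne
          have hxval : x j' = - g (pe j') := by
            have : ¬ (G.src (pe j') = p j') := by rw [hsrc]; exact Ne.symm hpne
            simp [hxdef, this]
          simp [hcdef, hsrc, ht, hxval]
      have hce2 : c (pe j) = x j := by
        rcases hinc j hj with ⟨h1, h2⟩ | ⟨h1, h2⟩
        · have ht : ¬ (G.tgt (pe j) = p j) := by rw [h2]; exact hpne2
          have hxval : x j = g (pe j) := by simp [hxdef, h1]
          simp [hcdef, h1, ht, hxval]
        · have hs : ¬ (G.src (pe j) = p j) := by rw [h1]; exact hpne2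
          have hxval : x j = - g (pe j) := by simp [hxdef, hs]
          simp [hcdef, hs, h2, hxval]
      obtain ⟨u, hu, huq⟩ := hcap3
      have hce3 : ∃ w : ℝ, (w ∈ Set.Ioo (1:ℝ) 4 ∨ w ∈ Set.Ioo (-4:ℝ) (-1)) ∧
          c e3 = (w : AddCircle (5:ℝ)) := by
        have hcval : c e3 = g e3 ∨ c e3 = - g e3 := by
          rcases hxor with ⟨h1', h2'⟩ | ⟨h1', h2'⟩
          · left; simp [hcdef, h1', h2']
          · right; simp [hcdef, h1', h2']
        have hfu : f e3 = (u : AddCircle (5:ℝ)) := huq.symm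
        have hneg : - f e3 = ((-u : ℝ) : AddCircle (5:ℝ)) := by rw [hfu]; rfl
        have huneg : (-u : ℝ) ∈ Set.Ioo (-4:ℝ) (-1) :=
          ⟨neg_lt_neg hu.2, neg_lt_neg hu.1⟩
        rcases hcval with hcv | hcv <;> rcases hgf e3 with hg' | hg'
        · exact ⟨u, Or.inl hu, by rw [hcv, hg', hfu]⟩
        · exact ⟨-u, Or.inr huneg, by rw [hcv, hg', hneg]⟩
        · exact ⟨-u, Or.inr huneg, by rw [hcv, hg', hneg]⟩
        · exact ⟨u, Or.inl hu, by rw [hcv, hg', neg_neg, hfu]⟩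
      obtain ⟨w, hw, hwc⟩ := hce3
      refine ⟨w, hw, ?_⟩
      rw [hce1, hce2, hwc] at hs1'
      have : x j' = x j + (w : AddCircle (5:ℝ)) := by rwa [neg_add_eq_zero] at hs1'
      rw [this, add_sub_cancel_left]
    -- flip of interval membership
    have hflip : ∀ j, j < m → ((x ((j + (m-1)) % m) ∈ I1) ↔ ¬ (x j ∈ I1)) := by
      intro j hj
      obtain ⟨w, hw, heq⟩ := hstep j hj
      have hj'lt : (j + (m-1)) % m < m := Nat.mod_lt _ hm0
      have hA1 := hxA _ hj'lt
      have hA2 := hxA j hj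
      constructor
      · intro h1 h2
        obtain ⟨u, hu, hux⟩ := h1
        obtain ⟨v', hv, hvx⟩ := h2
        rw [← hux, ← hvx] at heq
        exact key_disj hu hv hw heq
      · intro h1
        by_contra h2
        have hA1' : x ((j + (m-1)) % m) ∈ I2 := hA1.resolve_left h2
        have hA2' : x j ∈ I2 := hA2.resolve_left h1
        obtain ⟨u, hu, hux⟩ := hA1'
        obtain ⟨v', hv, hvx⟩ := hA2'
        rw [← hux, ← hvx] at heq
        have hu' : u ∈ Set.Ioo (-(n:ℝ)-1) ((-(n:ℝ)-1)+1) := by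
          rw [show (-(n:ℝ)-1)+1 = -(n:ℝ) by ring]; exact hu
        have hv' : v' ∈ Set.Ioo (-(n:ℝ)-1) ((-(n:ℝ)-1)+1) := by
          rw [show (-(n:ℝ)-1)+1 = -(n:ℝ) by ring]; exact hv
        exact key_disj hu' hv' hw heq
    have harith : ∀ i, i < m → ((i+1) % m + (m-1)) % m = i := by
      intro i hi
      by_cases h : i + 1 < m
      · rw [Nat.mod_eq_of_lt h, show i + 1 + (m-1) = i + m by omega, Nat.add_mod_right,
          Nat.mod_eq_of_lt hi]
      · have h' : i + 1 = m := by omega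
        rw [h', Nat.mod_self, Nat.zero_add, Nat.mod_eq_of_lt (by omega)]
        omega
    have hflip' : ∀ i, i < m → ((x i ∈ I1) ↔ ¬ (x ((i+1) % m) ∈ I1)) := by
      intro i hi
      have h := hflip ((i+1) % m) (Nat.mod_lt _ hm0)
      rw [harith i hi] at h
      tauto
    have hstep2 : ∀ k : ℕ, ((x ((k+1) % m) ∈ I1) ↔ ¬ (x (k % m) ∈ I1)) := by
      intro k
      have h1 : (k+1) % m = (k % m + 1) % m := by
        rw [Nat.add_mod k 1 m, Nat.mod_eq_of_lt (show (1:ℕ) < m by omega)]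
      have h := hflip' (k % m) (Nat.mod_lt _ hm0)
      rw [h1]
      tauto
    have hpar : ∀ k : ℕ, ((x (k % m) ∈ I1) ↔ (Even k ↔ (x (0 % m) ∈ I1))) := by
      intro k
      induction k with
      | zero => simp
      | succ k ih =>
        have h := hstep2 k
        rw [Nat.even_add_one]
        tauto
    have hfin := hpar m
    rw [Nat.mod_self, Nat.zero_mod] at hfin
    have hnotE : ¬ Even m := by rw [Nat.even_iff]; omega
    tauto
private lemma coe_sum {α : Type*} (s : Finset α) (g : α → ℝ) :
    ((∑ i ∈ s, g i : ℝ) : AddCircle (5:ℝ)) = ∑ i ∈ s, ((g i : ℝ) : AddCircle (5:ℝ)) :=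
  map_sum (QuotientAddGroup.mk' (AddSubgroup.zmultiples (5:ℝ))) g s

private lemma sum_split {ι : Type} [Fintype ι] (κ : ι → Type) [∀ i, Fintype (κ i)]
    [inst : Fintype (Σ i, κ i)] {M : Type*} [AddCommMonoid M] (F : (Σ i, κ i) → M) :
    ∑ ee : Σ i, κ i, F ee = ∑ i, ∑ d, F ⟨i, d⟩ := by
  have h : inst = Sigma.instFintype := Subsingleton.elim _ _
  have h2 : (@Finset.univ _ inst) = (@Finset.univ _ (@Sigma.instFintype ι κ _ _)) := by rw [h]
  rw [h2, ← Finset.univ_sigma_univ, Finset.sum_sigma]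

private lemma ite_or_exclusive {M : Type*} [AddCommMonoid M] (P Q : Prop)
    [Decidable P] [Decidable Q] (h : ¬(P ∧ Q)) (y : M) :
    (if P ∨ Q then y else 0) = (if P then y else 0) + (if Q then y else 0) := by
  by_cases hP : P <;> by_cases hQ : Q <;> simp [hP, hQ]
  exact absurd ⟨hP, hQ⟩ h

private lemma sum_ite_and {ι : Type*} [Fintype ι] {M : Type*} [AddCommMonoid M]
    (C : Prop) [Decidable C] (A : ι → Prop) [DecidablePred A] (y : ι → M) :
    ∑ d, (if A d ∧ C then y d else 0) = if C then ∑ d, (if A d then y d else 0) else 0 := by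
  by_cases hC : C <;> simp [hC]

private lemma erEmbed_eq_inl (G : Multigraph) (H : G.E → Multigraph) (a b : ∀ e, (H e).V)
    (hab : ∀ e, a e ≠ b e) (e : G.E) (x : (H e).V) (v : G.V) :
    (erEmbed G H a b e x = Sum.inl v) ↔ ((x = a e ∧ G.src e = v) ∨ (x = b e ∧ G.tgt e = v)) := by
  unfold erEmbed
  split_ifs with h1 h2
  · simp [h1, hab e]
  · simp [h1, h2, Ne.symm (hab e)]
  · simp [h1, h2]

private lemma erEmbed_eq_inr_same (G : Multigraph) (H : G.E → Multigraph) (a b : ∀ e, (H e).V)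
    (e : G.E) (x : (H e).V) (x₀ : {y : (H e).V // y ≠ a e ∧ y ≠ b e}) :
    (erEmbed G H a b e x = Sum.inr ⟨e, x₀⟩) ↔ x = x₀.1 := by
  unfold erEmbed
  split_ifs with h1 h2
  · simp [h1, Ne.symm x₀.2.1]
  · simp [h2, Ne.symm x₀.2.2]
  · simp [Subtype.ext_iff]

private lemma erEmbed_ne_inr (G : Multigraph) (H : G.E → Multigraph) (a b : ∀ e, (H e).V)
    (e e₀ : G.E) (hne : e ≠ e₀) (x : (H e).V)
    (x₀ : {y : (H e₀).V // y ≠ a e₀ ∧ y ≠ b e₀}) :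
    erEmbed G H a b e x ≠ Sum.inr ⟨e₀, x₀⟩ := by
  unfold erEmbed
  split_ifs <;> simp [hne]

private lemma addEdge_isFlowOn (Hm : Multigraph) (u v' : Hm.V) (τ0 : ℤˣ) (σ' : Hm.E → ℤˣ)
    (g0 : AddCircle (5:ℝ)) (g' : Hm.E → AddCircle (5:ℝ))
    (hcons : ∀ w,
      (if u = w then ((τ0:ℤ) • g0) else 0) + ∑ d, (if Hm.src d = w then ((σ' d : ℤ) • g' d) else 0)
      = (if v' = w then ((τ0:ℤ) • g0) else 0) +
          ∑ d, (if Hm.tgt d = w then ((σ' d : ℤ) • g' d) else 0)) :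
    (Hm.addEdge u v').IsFlowOn (fun o => o.elim τ0 σ') (fun o => o.elim g0 g') := by
  intro w
  rw [Finset.sum_filter, Finset.sum_filter]
  show (∑ o : Option Hm.E, (if (Hm.addEdge u v').src o = w
        then ((Option.elim o τ0 σ' : ℤˣ) : ℤ) • (Option.elim o g0 g') else 0))
      = ∑ o : Option Hm.E, (if (Hm.addEdge u v').tgt o = w
        then ((Option.elim o τ0 σ' : ℤˣ) : ℤ) • (Option.elim o g0 g') else 0)
  rw [Fintype.sum_option, Fintype.sum_option]
  exact hcons w

private lemma part2aux (G : Multigraph) (cap : G.E → Set (AddCircle (5:ℝ)))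
    (H : G.E → Multigraph) (a b : ∀ e, (H e).V) (hab : ∀ e, a e ≠ b e)
    (hCP : ∀ e, CP 5 (H e) (a e) (b e) = cap e)
    (hno : ¬ HasCapFlow 5 G cap)
    (r : ℝ) (hr : (edgeReplace G H a b).HasCNZF r) : 5 ≤ r := by
  by_contra hlt
  push_neg at hlt
  set K := edgeReplace G H a b with hKdef
  obtain ⟨σ, f, hflow, hbd⟩ := hr
  obtain ⟨t, hts⟩ : ∃ t : ℝ, ∀ ee : K.E, t * f ee ∈ Set.Ioo (1:ℝ) 4 := by
    by_cases hr2 : 2 ≤ r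
    · refine ⟨(1 + 4/(r-1))/2, fun ee => ?_⟩
      obtain ⟨h1, h2⟩ := hbd ee
      have hr1 : (1:ℝ) ≤ r - 1 := by linarith
      have hr1' : (0:ℝ) < r - 1 := by linarith
      have h4 : (1:ℝ) < 4/(r-1) := by rw [lt_div_iff₀ hr1']; linarith
      constructor
      · nlinarith
      · have h5 : (1 + 4/(r-1))/2 * f ee ≤ (1 + 4/(r-1))/2 * (r-1) := by nlinarith
        have h6 : 4/(r-1) * (r-1) = 4 := div_mul_cancel₀ 4 (ne_of_gt hr1')
        nlinarith
    · refine ⟨2, fun ee => ?_⟩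
      exfalso
      obtain ⟨h1, h2⟩ := hbd ee
      linarith
  set F : K.E → AddCircle (5:ℝ) := fun ee => ((t * f ee : ℝ) : AddCircle (5:ℝ)) with hFdef
  set sF : K.E → AddCircle (5:ℝ) := fun ee => ((σ ee : ℤ) • F ee) with hsFdef
  have hcoe : ∀ (P : K.E → Prop) (inst : DecidablePred P),
      (∑ ee, (if P ee then sF ee else 0))
      = ((t * ∑ ee, (if P ee then ((σ ee : ℤ) • f ee) else 0) : ℝ) : AddCircle (5:ℝ)) := by
    intro P inst
    rw [Finset.mul_sum, _root_.coe_sum]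
    apply Finset.sum_congr rfl
    intro ee _
    by_cases hP : P ee
    · simp only [hP, if_true]
      have h1 : (t * ((σ ee : ℤ) • f ee) : ℝ) = (σ ee : ℤ) • (t * f ee) := by
        simp only [zsmul_eq_mul]; ring
      rw [h1]
      rfl
    · simp [hP]
  have hKflow : ∀ w : K.V,
      (∑ ee, (if K.src ee = w then sF ee else 0)) = ∑ ee, (if K.tgt ee = w then sF ee else 0) := by
    intro w
    have h := hflow w
    rw [Finset.sum_filter, Finset.sum_filter] at h
    rw [hcoe _ _, hcoe _ _, h]
  set Sout : (e : G.E) → (H e).V → AddCircle (5:ℝ) :=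
    fun e w => ∑ d, (if (H e).src d = w then sF ⟨e,d⟩ else 0) with hSoutdef
  set Sin : (e : G.E) → (H e).V → AddCircle (5:ℝ) :=
    fun e w => ∑ d, (if (H e).tgt d = w then sF ⟨e,d⟩ else 0) with hSindef
  have hinner : ∀ (v : G.V) (e : G.E) (u : (H e).E → (H e).V) (y : (H e).E → AddCircle (5:ℝ)),
      (∑ d, (if erEmbed G H a b e (u d) = Sum.inl v then y d else 0))
      = (if G.src e = v then ∑ d, (if u d = a e then y d else 0) else 0)
        + (if G.tgt e = v then ∑ d, (if u d = b e then y d else 0) else 0) := by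
    intro v e u y
    have hpt : ∀ d, (if erEmbed G H a b e (u d) = Sum.inl v then y d else 0)
        = (if (u d = a e ∧ G.src e = v) then y d else 0)
          + (if (u d = b e ∧ G.tgt e = v) then y d else 0) := by
      intro d
      rw [if_congr (erEmbed_eq_inl G H a b hab e (u d) v) rfl rfl]
      apply ite_or_exclusive
      rintro ⟨⟨h1, _⟩, ⟨h2, _⟩⟩
      exact hab e (h1.symm.trans h2)
    rw [Finset.sum_congr rfl (fun d _ => hpt d), Finset.sum_add_distrib,
      sum_ite_and _ _ _, sum_ite_and _ _ _]
  have h_inl : ∀ v : G.V,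
      (∑ e, ((if G.src e = v then Sout e (a e) else 0) + (if G.tgt e = v then Sout e (b e) else 0)))
      = ∑ e, ((if G.src e = v then Sin e (a e) else 0) + (if G.tgt e = v then Sin e (b e) else 0)) := by
    intro v
    have h := hKflow (Sum.inl v)
    have hsplit1 : (∑ ee : K.E, (@ite _ (K.src ee = Sum.inl v) (K.decV _ _) (sF ee) 0))
        = ∑ e, ∑ d, (if erEmbed G H a b e ((H e).src d) = Sum.inl v then sF ⟨e,d⟩ else 0) :=
      sum_split _ _
    have hsplit2 : (∑ ee : K.E, (@ite _ (K.tgt ee = Sum.inl v) (K.decV _ _) (sF ee) 0))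
        = ∑ e, ∑ d, (if erEmbed G H a b e ((H e).tgt d) = Sum.inl v then sF ⟨e,d⟩ else 0) :=
      sum_split _ _
    have h' := (hsplit1.symm.trans h).trans hsplit2
    have h1 := Finset.sum_congr rfl
      (fun e (_ : e ∈ Finset.univ) => hinner v e ((H e).src) (fun d => sF ⟨e,d⟩))
    have h2 := Finset.sum_congr rfl
      (fun e (_ : e ∈ Finset.univ) => hinner v e ((H e).tgt) (fun d => sF ⟨e,d⟩))
    exact (h1.symm.trans h').trans h2
  have h_inr : ∀ (e₀ : G.E) (x₀ : {y : (H e₀).V // y ≠ a e₀ ∧ y ≠ b e₀}),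
      Sout e₀ x₀.1 = Sin e₀ x₀.1 := by
    intro e₀ x₀
    have h := hKflow (Sum.inr ⟨e₀, x₀⟩)
    have hsplit1 : (∑ ee : K.E, (@ite _ (K.src ee = Sum.inr ⟨e₀, x₀⟩) (K.decV _ _) (sF ee) 0))
        = ∑ e, ∑ d, (if erEmbed G H a b e ((H e).src d) = Sum.inr ⟨e₀, x₀⟩ then sF ⟨e,d⟩ else 0) :=
      sum_split _ _
    have hsplit2 : (∑ ee : K.E, (@ite _ (K.tgt ee = Sum.inr ⟨e₀, x₀⟩) (K.decV _ _) (sF ee) 0))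
        = ∑ e, ∑ d, (if erEmbed G H a b e ((H e).tgt d) = Sum.inr ⟨e₀, x₀⟩ then sF ⟨e,d⟩ else 0) :=
      sum_split _ _
    have h' := (hsplit1.symm.trans h).trans hsplit2
    have hcol : ∀ (u : ∀ e, (H e).E → (H e).V),
        (∑ e, ∑ d, (if erEmbed G H a b e (u e d) = Sum.inr ⟨e₀, x₀⟩ then sF ⟨e,d⟩ else 0))
        = ∑ d, (if u e₀ d = x₀.1 then sF ⟨e₀,d⟩ else 0) := by
      intro u
      rw [Finset.sum_eq_single_of_mem e₀ (Finset.mem_univ _)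
        (fun e _ hne => Finset.sum_eq_zero
          (fun d _ => if_neg (erEmbed_ne_inr G H a b e e₀ hne (u e d) x₀)))]
      exact Finset.sum_congr rfl
        (fun d _ => if_congr (erEmbed_eq_inr_same G H a b e₀ (u e₀ d) x₀) rfl rfl)
    have hfin := ((hcol _).symm.trans h').trans (hcol _)
    simpa [hSoutdef, hSindef] using hfin
  have htotal : ∀ e₀ : G.E, (∑ w : (H e₀).V, (Sout e₀ w - Sin e₀ w)) = 0 := by
    intro e₀
    rw [Finset.sum_sub_distrib]
    have h1 : (∑ w : (H e₀).V, Sout e₀ w) = ∑ d, sF ⟨e₀, d⟩ := by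
      simp only [hSoutdef]
      rw [Finset.sum_comm]
      apply Finset.sum_congr rfl
      intro d _
      rw [Finset.sum_ite_eq]
      simp
    have h2 : (∑ w : (H e₀).V, Sin e₀ w) = ∑ d, sF ⟨e₀, d⟩ := by
      simp only [hSindef]
      rw [Finset.sum_comm]
      apply Finset.sum_congr rfl
      intro d _
      rw [Finset.sum_ite_eq]
      simp
    rw [h1, h2, sub_self]
  have hnetb : ∀ e₀ : G.E,
      Sout e₀ (b e₀) - Sin e₀ (b e₀) = -(Sout e₀ (a e₀) - Sin e₀ (a e₀)) := by
    intro e₀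
    have htot := htotal e₀
    set netf : (H e₀).V → AddCircle (5:ℝ) := fun w => Sout e₀ w - Sin e₀ w with hnetfdef
    have hs1 : netf (a e₀) + ∑ w ∈ Finset.univ.erase (a e₀), netf w = ∑ w, netf w :=
      Finset.add_sum_erase _ _ (Finset.mem_univ _)
    have hmem : b e₀ ∈ Finset.univ.erase (a e₀) :=
      Finset.mem_erase.mpr ⟨Ne.symm (hab e₀), Finset.mem_univ _⟩
    have hs2 : netf (b e₀) + ∑ w ∈ (Finset.univ.erase (a e₀)).erase (b e₀), netf w
        = ∑ w ∈ Finset.univ.erase (a e₀), netf w :=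
      Finset.add_sum_erase _ _ hmem
    have hrest : ∑ w ∈ (Finset.univ.erase (a e₀)).erase (b e₀), netf w = 0 := by
      apply Finset.sum_eq_zero
      intro w hw
      obtain ⟨hwb, hw'⟩ := Finset.mem_erase.mp hw
      obtain ⟨hwa, _⟩ := Finset.mem_erase.mp hw'
      have h := h_inr e₀ ⟨w, hwa, hwb⟩
      simp only [hnetfdef]
      rw [h, sub_self]
    rw [hrest, add_zero] at hs2
    rw [← hs2] at hs1
    rw [htot] at hs1
    have : netf (b e₀) = - netf (a e₀) := by
      rwa [add_comm, add_eq_zero_iff_eq_neg] at hs1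
    exact this
  set fG : G.E → AddCircle (5:ℝ) := fun e => Sout e (a e) - Sin e (a e) with hfGdef
  have hGflow : G.IsFlowOn (fun _ => (1:ℤˣ)) fG := by
    intro v
    simp only [Units.val_one, one_smul]
    rw [Finset.sum_filter, Finset.sum_filter]
    have h := h_inl v
    rw [Finset.sum_add_distrib, Finset.sum_add_distrib] at h
    have hL : (∑ e, (if G.src e = v then fG e else 0))
        = (∑ e, (if G.src e = v then Sout e (a e) else 0))
          - ∑ e, (if G.src e = v then Sin e (a e) else 0) := by
      rw [← Finset.sum_sub_distrib]
      apply Finset.sum_congr rfl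
      intro e _
      by_cases hc : G.src e = v <;> simp [hc, hfGdef]
    have hR : (∑ e, (if G.tgt e = v then fG e else 0))
        = -((∑ e, (if G.tgt e = v then Sout e (b e) else 0))
          - ∑ e, (if G.tgt e = v then Sin e (b e) else 0)) := by
      rw [neg_sub, ← Finset.sum_sub_distrib]
      apply Finset.sum_congr rfl
      intro e _
      by_cases hc : G.tgt e = v
      · simp only [hc, if_true, hfGdef]
        have h' := congrArg Neg.neg (hnetb e)
        rw [neg_neg] at h'
        rw [← h', neg_sub]
      · simp [hc]
    rw [hL, hR, neg_sub, sub_eq_sub_iff_add_eq_add, h]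
    exact add_comm _ _
  have hGmem : ∀ e, fG e ∈ cap e := by
    intro e
    rw [← hCP e]
    refine ⟨fun o => o.elim (-1) (fun d => σ ⟨e,d⟩),
      fun o => o.elim (fG e) (fun d => F ⟨e,d⟩), ?_, ?_, rfl⟩
    · apply addEdge_isFlowOn
      intro w
      have hval : (((-1 : ℤˣ) : ℤ) • fG e) = - fG e := by simp
      rw [hval]
      by_cases hw1 : a e = w
      · have hw2 : ¬ (b e = w) := fun h => hab e (hw1.trans h.symm)
        rw [if_pos hw1, if_neg hw2, ← hw1]
        have hout : (∑ d, (if (H e).src d = a e then ((σ ⟨e,d⟩ : ℤ) • F ⟨e,d⟩) else 0))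
            = Sout e (a e) := by simp [hSoutdef, hsFdef]
        have hin : (∑ d, (if (H e).tgt d = a e then ((σ ⟨e,d⟩ : ℤ) • F ⟨e,d⟩) else 0))
            = Sin e (a e) := by simp [hSindef, hsFdef]
        rw [hout, hin]
        simp only [hfGdef]
        abel
      · by_cases hw2 : b e = w
        · rw [if_neg hw1, if_pos hw2, ← hw2]
          have hout : (∑ d, (if (H e).src d = b e then ((σ ⟨e,d⟩ : ℤ) • F ⟨e,d⟩) else 0))
              = Sout e (b e) := by simp [hSoutdef, hsFdef]
          have hin : (∑ d, (if (H e).tgt d = b e then ((σ ⟨e,d⟩ : ℤ) • F ⟨e,d⟩) else 0))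
              = Sin e (b e) := by simp [hSindef, hsFdef]
          rw [hout, hin, zero_add]
          have h := hnetb e
          rw [sub_eq_iff_eq_add] at h
          rw [h]
        · rw [if_neg hw1, if_neg hw2, zero_add, zero_add]
          have h := h_inr e ⟨w, fun hh => hw1 hh.symm, fun hh => hw2 hh.symm⟩
          have hout : (∑ d, (if (H e).src d = w then ((σ ⟨e,d⟩ : ℤ) • F ⟨e,d⟩) else 0))
              = Sout e w := by simp [hSoutdef, hsFdef]
          have hin : (∑ d, (if (H e).tgt d = w then ((σ ⟨e,d⟩ : ℤ) • F ⟨e,d⟩) else 0))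
              = Sin e w := by simp [hSindef, hsFdef]
          rw [hout, hin, h]
    · intro d
      show F ⟨e, d⟩ ∈ openArc 5 1 ((5:ℝ) - 1)
      rw [show ((5:ℝ) - 1) = 4 by norm_num, openArc_14]
      exact ⟨t * f ⟨e,d⟩, hts ⟨e,d⟩, rfl⟩
  exact hno ⟨fun _ => 1, fG, hGflow, hGmem⟩
/-- If a capacitated graph `G` contains an odd cycle along
vertices of degree 3, all of whose edges carry the same capacity `A` — a
symmetric union of two distinct open unit integer intervals of `ℝ/5ℤ` (so
`Me(A) = 2`) — and the third edge at each vertex of the cycle has capacity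
contained in `(1,4)`, then `G` admits no sub-5-MCNZF; consequently any graph
obtained by realizing each capacity by a g-edge of that open 5-capacity has
circular flow number at least 5. -/
theorem odd_cycle_no_flow (G : Multigraph) (cap : G.E → Set (AddCircle (5 : ℝ)))
    (m : ℕ) (hodd : Odd m) (p : ℕ → G.V) (pe : ℕ → G.E)
    (hclosed : p m = p 0)
    (hinjV : Set.InjOn p (Set.Iio m)) (hinjE : Set.InjOn pe (Set.Iio m))
    (hinc : ∀ i < m, (G.src (pe i) = p i ∧ G.tgt (pe i) = p (i + 1)) ∨
      (G.src (pe i) = p (i + 1) ∧ G.tgt (pe i) = p i))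
    (n : ℤ) (A : Set (AddCircle (5 : ℝ)))
    (hA : A = openArc 5 (n : ℝ) ((n : ℝ) + 1) ∪ openArc 5 (-(n : ℝ) - 1) (-(n : ℝ)))
    (htwo : openArc 5 (n : ℝ) ((n : ℝ) + 1) ≠ openArc 5 (-(n : ℝ) - 1) (-(n : ℝ)))
    (hcapA : ∀ i < m, cap (pe i) = A)
    (hdeg : ∀ i < m, G.degree (p i) = 3)
    (hthird : ∀ i < m, ∀ e : G.E, (∀ j < m, e ≠ pe j) →
      (G.src e = p i ∨ G.tgt e = p i) → cap e ⊆ openArc 5 1 4) :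
    ¬ HasCapFlow 5 G cap ∧
    ∀ (H : G.E → Multigraph) (a b : ∀ e, (H e).V), (∀ e, a e ≠ b e) →
      (∀ e, CP 5 (H e) (a e) (b e) = cap e) →
      ((5 : ℝ) : EReal) ≤ circFlowNumber (edgeReplace G H a b) := by
  have h1 := part1 G cap m hodd p pe hclosed hinjV hinjE hinc n A hA hcapA hdeg hthird
  refine ⟨h1, ?_⟩
  intro H a b hab hCP
  unfold circFlowNumber
  apply le_sInf
  rintro x ⟨r, rfl, hr⟩
  have h5 : 5 ≤ r := part2aux G cap H a b hab hCP h1 r hr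
  exact_mod_cast h5
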